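/- Let A be a 3×3 integer matrix with det A = 1, and let α ∈ ℤ be such that the 3×3 matrix A − αI reduced mod q has rank at most 1 over 𝔽_q (q prime). Then α² · tr A − α · tr A⁻¹ ≡ α³ − 1 mod q². -/

import Mathlib

/-- Rank-≤1 matrices over a field have columns that are multiples of a single vector. -/
lemma rank_le_one_decomp {K : Type*} [Field K] (M : Matrix (Fin 3) (Fin 3) K)
    (h : M.rank ≤ 1) : ∃ u v : Fin 3 → K, ∀ i j, M i j = u i * v j := by
  rw [Matrix.rank] at h
  obtain ⟨⟨u, hu⟩, hvv⟩ := finrank_le_one_iff.mp h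
  have hcol : ∀ j, M.mulVec (Pi.single j 1) ∈ LinearMap.range M.mulVecLin :=
    fun j => ⟨Pi.single j 1, M.mulVecLin_apply _⟩
  refine ⟨u, fun j => Classical.choose (hvv ⟨M.mulVec (Pi.single j 1), hcol j⟩),
    fun i j => ?_⟩
  have hch := Classical.choose_spec (hvv ⟨M.mulVec (Pi.single j 1), hcol j⟩)
  have h2 := congrArg (fun w : LinearMap.range M.mulVecLin => (w : Fin 3 → K) i) hch
  simp only [SetLike.val_smul, Pi.smul_apply, smul_eq_mul] at h2
  rw [show (M.mulVec (Pi.single j 1)) i = M i j by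
    simp [Matrix.mulVec_single]] at h2
  rw [← h2]; ring

/-- Rank-≤1 3×3 matrices over a field have zero adjugate. -/
lemma adjugate_eq_zero_of_rank_le_one {K : Type*} [Field K] (M : Matrix (Fin 3) (Fin 3) K)
    (h : M.rank ≤ 1) : M.adjugate = 0 := by
  obtain ⟨u, v, huv⟩ := rank_le_one_decomp M h
  rw [Matrix.adjugate_fin_three]
  ext i j
  fin_cases i <;> fin_cases j <;>
    simp [huv] <;> ring

set_option maxHeartbeats 1000000 in
/-- Let A be a 3×3 integer matrix with det A = 1, and α ∈ ℤ such that A − αI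
reduced mod q has rank at most 1 over 𝔽_q (q prime). Then
α² tr A − α tr A⁻¹ ≡ α³ − 1 mod q². -/
theorem stmt7 (q : ℕ) (hq : q.Prime) (A : Matrix (Fin 3) (Fin 3) ℤ) (hA : A.det = 1)
    (α : ℤ)
    (hrank : Matrix.rank ((A - α • (1 : Matrix (Fin 3) (Fin 3) ℤ)).map
      (Int.cast : ℤ → ZMod q)) ≤ 1) :
    ((q : ℤ)) ^ 2 ∣ α ^ 2 * Matrix.trace A - α * Matrix.trace A⁻¹ - (α ^ 3 - 1) := by
  haveI : Fact q.Prime := ⟨hq⟩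
  set B : Matrix (Fin 3) (Fin 3) ℤ := A - α • (1 : Matrix (Fin 3) (Fin 3) ℤ) with hB
  -- Step 1: q² ∣ det B
  have hadj0 : (B.map (Int.cast : ℤ → ZMod q)).adjugate = 0 :=
    adjugate_eq_zero_of_rank_le_one _ hrank
  have hmap : (B.adjugate).map (Int.cast : ℤ → ZMod q) = 0 := by
    rw [show (B.adjugate).map (Int.cast : ℤ → ZMod q)
        = ((Int.castRingHom (ZMod q)).mapMatrix B).adjugate from
      (RingHom.map_adjugate (Int.castRingHom (ZMod q)) B)]
    exact hadj0
  have hdvdentry : ∀ i j, (q : ℤ) ∣ B.adjugate i j := by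
    intro i j
    have := congrFun (congrFun hmap i) j
    simp only [Matrix.map_apply, Matrix.zero_apply] at this
    exact (ZMod.intCast_zmod_eq_zero_iff_dvd _ q).mp this
  -- adjugate B = q • C
  set C : Matrix (Fin 3) (Fin 3) ℤ := Matrix.of (fun i j => B.adjugate i j / q) with hC
  have hBC : B.adjugate = (q : ℤ) • C := by
    ext i j
    simp only [Matrix.smul_apply, hC, Matrix.of_apply, smul_eq_mul]
    exact (Int.ediv_mul_cancel (hdvdentry i j)).symm ▸ (Int.mul_ediv_cancel' (hdvdentry i j)).symm
  have hq0 : (q : ℤ) ≠ 0 := Int.natCast_ne_zero.mpr hq.ne_zero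
  have hqprime : Prime (q : ℤ) := Nat.prime_iff_prime_int.mp hq
  have hdet3 : (q : ℤ) ^ 3 ∣ B.det ^ 2 := by
    have h1 : B.adjugate.det = B.det ^ 2 := by
      rw [Matrix.det_adjugate]; norm_num
    have h2 : B.adjugate.det = (q : ℤ) ^ 3 * C.det := by
      rw [hBC, Matrix.det_smul]; norm_num
    exact ⟨C.det, by rw [← h1, h2]⟩
  have hq2detB : (q : ℤ) ^ 2 ∣ B.det := by
    have hq1 : (q : ℤ) ∣ B.det := by
      have : (q : ℤ) ∣ B.det ^ 2 := dvd_trans (dvd_pow_self _ (by norm_num)) hdet3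
      exact hqprime.dvd_of_dvd_pow this
    obtain ⟨e, he⟩ := hq1
    have hqe : (q : ℤ) ∣ e := by
      have h4 : (q : ℤ) ^ 3 ∣ (q : ℤ) ^ 2 * e ^ 2 := by
        rw [← mul_pow, ← he]; exact hdet3
      have : (q : ℤ) ∣ e ^ 2 := by
        obtain ⟨k, hk⟩ := h4
        refine ⟨k, ?_⟩
        have : (q : ℤ) ^ 2 * e ^ 2 = (q : ℤ) ^ 2 * ((q : ℤ) * k) := by ring_nf; ring_nf at hk; linarith
        exact mul_left_cancel₀ (pow_ne_zero 2 hq0) this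
      exact hqprime.dvd_of_dvd_pow this
    obtain ⟨f, hf⟩ := hqe
    exact ⟨f, by rw [he, hf]; ring⟩
  -- Step 2: det B equals the target expression
  have hAinv : A⁻¹ = A.adjugate := by
    rw [Matrix.inv_def, hA]; simp
  have hkey : B.det = α ^ 2 * Matrix.trace A - α * Matrix.trace A⁻¹ - (α ^ 3 - 1) := by
    rw [hAinv, hB]
    rw [Matrix.det_fin_three] at hA ⊢
    rw [Matrix.trace_fin_three, Matrix.trace_fin_three, Matrix.adjugate_fin_three]
    simp only [Matrix.sub_apply, Matrix.smul_apply, Matrix.one_apply, Matrix.cons_val',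
      Matrix.cons_val_zero, Matrix.cons_val_one, Matrix.head_cons, Matrix.empty_val',
      Matrix.cons_val_fin_one, Matrix.head_fin_const, Matrix.of_apply, smul_eq_mul,
      Fin.isValue, mul_one, if_true, if_false]
    norm_num [Fin.ext_iff, Matrix.cons_val_two, Matrix.vecHead, Matrix.vecTail]
    linarith [hA]
  rw [← hkey]; exact hq2detB
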